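/- Let w be uniformly distributed on the unit sphere S^{d-1} for d ≥ 1, and z, t ∈ ℝ^d. Then E[ (⟨z,w⟩⟨w,t⟩)² ] = (2⟨z,t⟩² + ‖z‖²‖t‖²) / (d(d+2)). -/

import Mathlib

open MeasureTheory Real

open scoped RealInnerProductSpace

variable {d : ℕ} {μ : Measure (EuclideanSpace ℝ (Fin d))} [IsProbabilityMeasure μ]

private lemma integ (hsphere : ∀ᵐ w ∂μ, ‖w‖ = 1) (x y : EuclideanSpace ℝ (Fin d)) (m n : ℕ) :
    Integrable (fun w => ⟪x, w⟫ ^ m * ⟪y, w⟫ ^ n) μ := by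
  apply Integrable.mono' (integrable_const (‖x‖ ^ m * ‖y‖ ^ n))
  · exact (((innerSL ℝ x).continuous.pow m).mul
      ((innerSL ℝ y).continuous.pow n)).aestronglyMeasurable
  · filter_upwards [hsphere] with w hw
    have h1 : |⟪x, w⟫| ≤ ‖x‖ := by simpa [hw] using abs_real_inner_le_norm x w
    have h2 : |⟪y, w⟫| ≤ ‖y‖ := by simpa [hw] using abs_real_inner_le_norm y w
    have := pow_le_pow_left₀ (abs_nonneg _) h1 m
    have := pow_le_pow_left₀ (abs_nonneg _) h2 n
    calc ‖⟪x, w⟫ ^ m * ⟪y, w⟫ ^ n‖ = |⟪x, w⟫| ^ m * |⟪y, w⟫| ^ n := by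
          rw [norm_mul, norm_pow, norm_pow]; rfl
      _ ≤ ‖x‖ ^ m * ‖y‖ ^ n := by
          exact mul_le_mul ‹_› ‹_› (by positivity) (by positivity)

private lemma inv_int (hinv : ∀ e : EuclideanSpace ℝ (Fin d) ≃ₗᵢ[ℝ] EuclideanSpace ℝ (Fin d),
      μ.map e = μ)
    (e : EuclideanSpace ℝ (Fin d) ≃ₗᵢ[ℝ] EuclideanSpace ℝ (Fin d))
    (f : EuclideanSpace ℝ (Fin d) → ℝ) (hf : Continuous f) :
    ∫ w, f (e w) ∂μ = ∫ w, f w ∂μ := by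
  conv_rhs => rw [← hinv e]
  rw [integral_map e.continuous.measurable.aemeasurable hf.aestronglyMeasurable]

private lemma ext_pair (hd : 2 ≤ d) {z u : EuclideanSpace ℝ (Fin d)} (hz : ‖z‖ = 1)
    (hu : ‖u‖ = 1) (hzu : ⟪z, u⟫ = 0) :
    ∃ b : OrthonormalBasis (Fin d) ℝ (EuclideanSpace ℝ (Fin d)),
      b ⟨0, by omega⟩ = z ∧ b ⟨1, by omega⟩ = u := by
  set i0 : Fin d := ⟨0, by omega⟩ with hi0
  set i1 : Fin d := ⟨1, by omega⟩ with hi1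
  have hne : i0 ≠ i1 := by simp [hi0, hi1, Fin.ext_iff]
  set v : Fin d → EuclideanSpace ℝ (Fin d) := fun i => if i = i0 then z else u with hv
  have hortho : Orthonormal ℝ (({i0, i1} : Set (Fin d)).restrict v) := by
    constructor
    · rintro ⟨i, hi⟩
      change ‖v i‖ = 1
      by_cases h : i = i0 <;> simp [hv, h, hz, hu]
    · rintro ⟨i, hi⟩ ⟨j, hj⟩ hij
      simp only [Set.mem_insert_iff, Set.mem_singleton_iff] at hi hj
      have hij' : i ≠ j := fun h => hij (by simpa using h)
      have hv0 : v i0 = z := if_pos rfl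
      have hv1 : v i1 = u := if_neg (Ne.symm hne)
      rcases hi with rfl | rfl <;> rcases hj with rfl | rfl
      · exact absurd rfl hij'
      · show ⟪v i0, v i1⟫ = 0
        rw [hv0, hv1]; exact hzu
      · show ⟪v i1, v i0⟫ = 0
        rw [hv0, hv1, real_inner_comm]; exact hzu
      · exact absurd rfl hij'
  obtain ⟨b, hb⟩ := hortho.exists_orthonormalBasis_extension_of_card_eq
    (by simp)
  refine ⟨b, ?_, ?_⟩
  · simpa [hv] using hb i0 (by simp)
  · have := hb i1 (by simp)
    simpa [hv, (hne.symm : i1 ≠ i0)] using this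

private lemma ext_single (hd : 1 ≤ d) {z : EuclideanSpace ℝ (Fin d)} (hz : ‖z‖ = 1) :
    ∃ b : OrthonormalBasis (Fin d) ℝ (EuclideanSpace ℝ (Fin d)), b ⟨0, hd⟩ = z := by
  set i0 : Fin d := ⟨0, hd⟩ with hi0
  set v : Fin d → EuclideanSpace ℝ (Fin d) := fun _ => z with hv
  have hortho : Orthonormal ℝ (({i0} : Set (Fin d)).restrict v) := by
    constructor
    · rintro ⟨i, hi⟩; change ‖v i‖ = 1; simpa [hv] using hz
    · rintro ⟨i, hi⟩ ⟨j, hj⟩ hij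
      simp only [Set.mem_singleton_iff] at hi hj
      exact absurd (by simp [hi, hj] : (⟨i,_⟩ : ({i0} : Set (Fin d))) = ⟨j,_⟩) hij
  obtain ⟨b, hb⟩ := hortho.exists_orthonormalBasis_extension_of_card_eq (by simp)
  exact ⟨b, by simpa [hv] using hb i0 (by simp)⟩

private lemma pair_mom (hd : 2 ≤ d)
    (hinv : ∀ e : EuclideanSpace ℝ (Fin d) ≃ₗᵢ[ℝ] EuclideanSpace ℝ (Fin d), μ.map e = μ)
    {z u z' u' : EuclideanSpace ℝ (Fin d)} (hz : ‖z‖ = 1) (hu : ‖u‖ = 1) (hzu : ⟪z, u⟫ = 0)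
    (hz' : ‖z'‖ = 1) (hu' : ‖u'‖ = 1) (hzu' : ⟪z', u'⟫ = 0) (m n : ℕ) :
    ∫ w, ⟪z, w⟫ ^ m * ⟪u, w⟫ ^ n ∂μ = ∫ w, ⟪z', w⟫ ^ m * ⟪u', w⟫ ^ n ∂μ := by
  obtain ⟨b, hb0, hb1⟩ := ext_pair hd hz hu hzu
  obtain ⟨b', hb0', hb1'⟩ := ext_pair hd hz' hu' hzu'
  set e := b.repr.trans b'.repr.symm with he
  have key : ∀ (x : EuclideanSpace ℝ (Fin d)) (i : Fin d), ⟪b' i, e x⟫ = ⟪b i, x⟫ := by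
    intro x i
    rw [← OrthonormalBasis.repr_apply_apply, ← OrthonormalBasis.repr_apply_apply]
    simp [he]
  have h1 : ∀ x, ⟪z', e x⟫ ^ m * ⟪u', e x⟫ ^ n = ⟪z, x⟫ ^ m * ⟪u, x⟫ ^ n := by
    intro x
    rw [← hb0', ← hb1', key, key, hb0, hb1]
  calc ∫ w, ⟪z, w⟫ ^ m * ⟪u, w⟫ ^ n ∂μ
      = ∫ w, ⟪z', e w⟫ ^ m * ⟪u', e w⟫ ^ n ∂μ := by
        refine integral_congr_ae (Filter.Eventually.of_forall fun w => ?_)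
        exact (h1 w).symm
    _ = ∫ w, ⟪z', w⟫ ^ m * ⟪u', w⟫ ^ n ∂μ :=
        inv_int hinv e _ (((innerSL ℝ z').continuous.pow m).mul
          ((innerSL ℝ u').continuous.pow n))

private lemma single_mom (hd : 1 ≤ d)
    (hinv : ∀ e : EuclideanSpace ℝ (Fin d) ≃ₗᵢ[ℝ] EuclideanSpace ℝ (Fin d), μ.map e = μ)
    {z z' : EuclideanSpace ℝ (Fin d)} (hz : ‖z‖ = 1) (hz' : ‖z'‖ = 1) (m : ℕ) :
    ∫ w, ⟪z, w⟫ ^ m ∂μ = ∫ w, ⟪z', w⟫ ^ m ∂μ := by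
  obtain ⟨b, hb0⟩ := ext_single hd hz
  obtain ⟨b', hb0'⟩ := ext_single hd hz'
  set e := b.repr.trans b'.repr.symm with he
  have key : ∀ (x : EuclideanSpace ℝ (Fin d)) (i : Fin d), ⟪b' i, e x⟫ = ⟪b i, x⟫ := by
    intro x i
    rw [← OrthonormalBasis.repr_apply_apply, ← OrthonormalBasis.repr_apply_apply]
    simp [he]
  have h1 : ∀ x, ⟪z', e x⟫ ^ m = ⟪z, x⟫ ^ m := by
    intro x; rw [← hb0', key, hb0]
  calc ∫ w, ⟪z, w⟫ ^ m ∂μ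
      = ∫ w, ⟪z', e w⟫ ^ m ∂μ := by
        refine integral_congr_ae (Filter.Eventually.of_forall fun w => ?_)
        exact (h1 w).symm
    _ = ∫ w, ⟪z', w⟫ ^ m ∂μ :=
        inv_int hinv e _ ((innerSL ℝ z').continuous.pow m)

private lemma integ1 (hsphere : ∀ᵐ w ∂μ, ‖w‖ = 1) (x : EuclideanSpace ℝ (Fin d)) (m : ℕ) :
    Integrable (fun w => ⟪x, w⟫ ^ m) μ := by
  simpa using integ hsphere x x m 0

private lemma moments (hd : 2 ≤ d) (hsphere : ∀ᵐ w ∂μ, ‖w‖ = 1)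
    (hinv : ∀ e : EuclideanSpace ℝ (Fin d) ≃ₗᵢ[ℝ] EuclideanSpace ℝ (Fin d), μ.map e = μ) :
    (∀ z u : EuclideanSpace ℝ (Fin d), ‖z‖ = 1 → ‖u‖ = 1 → ⟪z, u⟫ = 0 →
        ∫ w, ⟪z, w⟫ ^ 2 * ⟪u, w⟫ ^ 2 ∂μ = 1 / (d * (d + 2))) ∧
    (∀ z : EuclideanSpace ℝ (Fin d), ‖z‖ = 1 →
        ∫ w, ⟪z, w⟫ ^ 4 ∂μ = 3 / (d * (d + 2))) := by
  have hd1 : 1 ≤ d := le_trans one_le_two hd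
  set Zf : Fin d → EuclideanSpace ℝ (Fin d) := fun i => EuclideanSpace.single i (1 : ℝ)
    with hZf
  have hZnorm : ∀ i, ‖Zf i‖ = 1 := fun i => by simp [hZf]
  have hZinner : ∀ i j : Fin d, ⟪Zf i, Zf j⟫ = if i = j then 1 else 0 := by
    intro i j
    rcases eq_or_ne i j with rfl | h
    · simp [hZf, EuclideanSpace.inner_single_left, EuclideanSpace.single_apply]
    · simp [hZf, EuclideanSpace.inner_single_left, EuclideanSpace.single_apply, h, Ne.symm h]
  set i0 : Fin d := ⟨0, by omega⟩ with hi0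
  set i1 : Fin d := ⟨1, by omega⟩ with hi1
  have hne : i0 ≠ i1 := by simp [hi0, hi1, Fin.ext_iff]
  set m22 := ∫ w, ⟪Zf i0, w⟫ ^ 2 * ⟪Zf i1, w⟫ ^ 2 ∂μ with hm22
  set m4 := ∫ w, ⟪Zf i0, w⟫ ^ 4 ∂μ with hm4
  have h01 : ⟪Zf i0, Zf i1⟫ = 0 := by rw [hZinner]; simp [hne]
  have hall4 : ∀ z : EuclideanSpace ℝ (Fin d), ‖z‖ = 1 → ∫ w, ⟪z, w⟫ ^ 4 ∂μ = m4 :=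
    fun z hz => single_mom hd1 hinv hz (hZnorm i0) 4
  have hall22 : ∀ z u : EuclideanSpace ℝ (Fin d), ‖z‖ = 1 → ‖u‖ = 1 → ⟪z, u⟫ = 0 →
      ∫ w, ⟪z, w⟫ ^ 2 * ⟪u, w⟫ ^ 2 ∂μ = m22 :=
    fun z u hz hu hzu => pair_mom hd hinv hz hu hzu (hZnorm i0) (hZnorm i1) h01 2 2
  have hm43 : m4 = 3 * m22 := by
    set r : ℝ := (Real.sqrt 2)⁻¹ with hrdef
    have hr : r * r = 1 / 2 := by
      rw [hrdef, ← mul_inv, Real.mul_self_sqrt (by norm_num : (0:ℝ) ≤ 2)]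
      norm_num
    set z45 := r • (Zf i0 + Zf i1) with hz45def
    set u45 := r • (Zf i0 - Zf i1) with hu45def
    have e45 : ∀ w, ⟪z45, w⟫ = r * (⟪Zf i0, w⟫ + ⟪Zf i1, w⟫) := by
      intro w; rw [hz45def, real_inner_smul_left, inner_add_left]
    have f45 : ∀ w, ⟪u45, w⟫ = r * (⟪Zf i0, w⟫ - ⟪Zf i1, w⟫) := by
      intro w; rw [hu45def, real_inner_smul_left, inner_sub_left]
    have hzz : ⟪z45, z45⟫ = 1 := by
      rw [hz45def, real_inner_smul_left, real_inner_smul_right, inner_add_left,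
        inner_add_right, inner_add_right, hZinner, hZinner, hZinner, hZinner]
      simp [hne, Ne.symm hne]
      linear_combination 2 * hr
    have huu : ⟪u45, u45⟫ = 1 := by
      rw [hu45def, real_inner_smul_left, real_inner_smul_right, inner_sub_left,
        inner_sub_right, inner_sub_right, hZinner, hZinner, hZinner, hZinner]
      simp [hne, Ne.symm hne]
      linear_combination 2 * hr
    have hzu : ⟪z45, u45⟫ = 0 := by
      rw [hz45def, hu45def, real_inner_smul_left, real_inner_smul_right, inner_add_left,
        inner_sub_right, inner_sub_right, hZinner, hZinner, hZinner, hZinner]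
      simp [hne, Ne.symm hne]
    have hz45n : ‖z45‖ = 1 := by
      have h := real_inner_self_eq_norm_mul_norm z45
      rw [hzz] at h
      nlinarith [norm_nonneg z45]
    have hu45n : ‖u45‖ = 1 := by
      have h := real_inner_self_eq_norm_mul_norm u45
      rw [huu] at h
      nlinarith [norm_nonneg u45]
    have h45 := hall22 z45 u45 hz45n hu45n hzu
    have hpt : ∀ w, ⟪z45, w⟫ ^ 2 * ⟪u45, w⟫ ^ 2
        = (1/4) * ⟪Zf i0, w⟫ ^ 4 + (1/4) * ⟪Zf i1, w⟫ ^ 4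
          - (1/2) * (⟪Zf i0, w⟫ ^ 2 * ⟪Zf i1, w⟫ ^ 2) := by
      intro w
      rw [e45 w, f45 w]
      linear_combination ((r * r + 1/2) *
        ((⟪Zf i0, w⟫ + ⟪Zf i1, w⟫) * (⟪Zf i0, w⟫ - ⟪Zf i1, w⟫)) ^ 2) * hr
    have hint : ∫ w, ⟪z45, w⟫ ^ 2 * ⟪u45, w⟫ ^ 2 ∂μ
        = (1/4) * m4 + (1/4) * m4 - (1/2) * m22 := by
      have I0 : Integrable (fun w => (1/4 : ℝ) * ⟪Zf i0, w⟫ ^ 4) μ :=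
        (integ1 hsphere _ 4).const_mul _
      have I1 : Integrable (fun w => (1/4 : ℝ) * ⟪Zf i1, w⟫ ^ 4) μ :=
        (integ1 hsphere _ 4).const_mul _
      have I2 : Integrable (fun w => (1/2 : ℝ) * (⟪Zf i0, w⟫ ^ 2 * ⟪Zf i1, w⟫ ^ 2)) μ :=
        (integ hsphere _ _ 2 2).const_mul _
      have I01 : Integrable (fun w => (1/4 : ℝ) * ⟪Zf i0, w⟫ ^ 4
          + (1/4 : ℝ) * ⟪Zf i1, w⟫ ^ 4) μ := I0.add I1
      rw [integral_congr_ae (Filter.Eventually.of_forall hpt), integral_sub I01 I2,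
        integral_add I0 I1, integral_const_mul, integral_const_mul, integral_const_mul,
        hall4 (Zf i1) (hZnorm i1)]
    rw [h45] at hint
    linarith
  have hkey : (d : ℝ) * (d + 2) * m22 = 1 := by
    have hnorm1 : ∫ w, (∑ i, ⟪Zf i, w⟫ ^ 2) ^ 2 ∂μ = 1 := by
      have : (fun w : EuclideanSpace ℝ (Fin d) => (∑ i, ⟪Zf i, w⟫ ^ 2) ^ 2)
          =ᵐ[μ] fun _ => (1 : ℝ) := by
        filter_upwards [hsphere] with w hw
        have h1 : ∀ i, ⟪Zf i, w⟫ = w i := by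
          intro i; simp [hZf, EuclideanSpace.inner_single_left]
        have h2 : ∑ i, ⟪Zf i, w⟫ ^ 2 = 1 := by
          have hn := EuclideanSpace.norm_eq w
          rw [hw] at hn
          have : ∑ i, ‖w i‖ ^ 2 = 1 := by
            have h0 : (0:ℝ) ≤ ∑ i, ‖w i‖ ^ 2 := by positivity
            nlinarith [Real.sq_sqrt h0, hn.symm]
          simp only [h1]
          simpa [Real.norm_eq_abs, sq_abs] using this
        rw [h2]; norm_num
      rw [integral_congr_ae this]
      simp
    have hexp : ∀ w : EuclideanSpace ℝ (Fin d), (∑ i, ⟪Zf i, w⟫ ^ 2) ^ 2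
        = ∑ i, ∑ j, ⟪Zf i, w⟫ ^ 2 * ⟪Zf j, w⟫ ^ 2 := by
      intro w
      rw [sq, Finset.sum_mul_sum]
    rw [integral_congr_ae (Filter.Eventually.of_forall hexp)] at hnorm1
    rw [integral_finset_sum _ (fun i _ => integrable_finset_sum _
      (fun j _ => integ hsphere _ _ 2 2))] at hnorm1
    have heach : ∀ i j : Fin d, ∫ w, ⟪Zf i, w⟫ ^ 2 * ⟪Zf j, w⟫ ^ 2 ∂μ
        = if i = j then m4 else m22 := by
      intro i j
      rcases eq_or_ne i j with rfl | h
      · rw [if_pos rfl, ← hall4 (Zf i) (hZnorm i)]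
        exact integral_congr_ae (Filter.Eventually.of_forall fun w => by ring)
      · rw [if_neg h]
        exact hall22 (Zf i) (Zf j) (hZnorm i) (hZnorm j) (by rw [hZinner]; simp [h])
    have hrow : ∀ i : Fin d, ∑ j, (∫ w, ⟪Zf i, w⟫ ^ 2 * ⟪Zf j, w⟫ ^ 2 ∂μ)
        = m4 - m22 + d * m22 := by
      intro i
      have : ∀ j : Fin d, (∫ w, ⟪Zf i, w⟫ ^ 2 * ⟪Zf j, w⟫ ^ 2 ∂μ)
          = m22 + (if i = j then m4 - m22 else 0) := by
        intro j; rw [heach i j]; split <;> ring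
      rw [Finset.sum_congr rfl fun j _ => this j, Finset.sum_add_distrib,
        Finset.sum_const, Finset.sum_ite_eq]
      simp
      ring
    have hswap : ∀ i : Fin d, ∫ w, ∑ j, ⟪Zf i, w⟫ ^ 2 * ⟪Zf j, w⟫ ^ 2 ∂μ
        = ∑ j, ∫ w, ⟪Zf i, w⟫ ^ 2 * ⟪Zf j, w⟫ ^ 2 ∂μ :=
      fun i => integral_finset_sum _ (fun j _ => integ hsphere _ _ 2 2)
    have hrw : (∑ i : Fin d, ∫ w, ∑ j, ⟪Zf i, w⟫ ^ 2 * ⟪Zf j, w⟫ ^ 2 ∂μ)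
        = ∑ _i : Fin d, (m4 - m22 + d * m22) :=
      Finset.sum_congr rfl fun i _ => by rw [hswap i]; exact hrow i
    rw [hrw, Finset.sum_const, Finset.card_univ, Fintype.card_fin, nsmul_eq_mul] at hnorm1
    linear_combination hnorm1 - (d : ℝ) * hm43
  have hd0 : (0 : ℝ) < (d : ℝ) := by exact_mod_cast (by omega : 0 < d)
  have hN : ((d : ℝ) * ((d : ℝ) + 2)) ≠ 0 := by positivity
  constructor
  · intro z u hz hu hzu
    rw [hall22 z u hz hu hzu, eq_div_iff hN]
    linear_combination hkey
  · intro z hz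
    rw [hall4 z hz, hm43, eq_div_iff hN]
    linear_combination 3 * hkey


/-- For `d ≥ 1`, `w` uniformly distributed on the unit sphere `S^{d-1} ⊂ ℝ^d` (that is, `μ`
is a rotation-invariant probability measure concentrated on the unit sphere), `z, t ∈ ℝ^d`:
`E[(⟨z,w⟩⟨w,t⟩)²] = (2⟨z,t⟩² + ‖z‖²‖t‖²)/(d(d+2))`. -/
theorem stmt13 (d : ℕ) (hd : 1 ≤ d) (μ : Measure (EuclideanSpace ℝ (Fin d)))
    [IsProbabilityMeasure μ]
    (hsphere : ∀ᵐ w ∂μ, ‖w‖ = 1)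
    (hinv : ∀ e : EuclideanSpace ℝ (Fin d) ≃ₗᵢ[ℝ] EuclideanSpace ℝ (Fin d), μ.map e = μ)
    (z t : EuclideanSpace ℝ (Fin d)) :
    ∫ w, ((inner ℝ z w : ℝ) * (inner ℝ w t : ℝ)) ^ 2 ∂μ
      = (2 * (inner ℝ z t : ℝ) ^ 2 + ‖z‖ ^ 2 * ‖t‖ ^ 2) / (d * (d + 2)) := by
  rcases eq_or_lt_of_le hd with hd1 | hd2
  · -- d = 1
    subst hd1
    have hinner : ∀ x y : EuclideanSpace ℝ (Fin 1), ⟪x, y⟫ = x 0 * y 0 := by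
      intro x y
      simp [PiLp.inner_apply, Fin.sum_univ_one, RCLike.inner_apply]
      ring
    have key : (fun w : EuclideanSpace ℝ (Fin 1) => ((inner ℝ z w : ℝ) * (inner ℝ w t : ℝ)) ^ 2)
        =ᵐ[μ] fun _ => (z 0 * t 0) ^ 2 := by
      filter_upwards [hsphere] with w hw
      have hw2 : (w 0) ^ 2 = 1 := by
        have hn := EuclideanSpace.norm_eq w
        rw [hw, Fin.sum_univ_one] at hn
        have h0 : (0:ℝ) ≤ ‖w 0‖ ^ 2 := by positivity
        have := Real.sq_sqrt h0
        rw [← hn] at this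
        simpa [Real.norm_eq_abs, sq_abs] using this.symm
      show ((⟪z, w⟫ : ℝ) * (⟪w, t⟫ : ℝ)) ^ 2 = (z 0 * t 0) ^ 2
      rw [hinner, hinner]
      linear_combination (z 0 ^ 2 * t 0 ^ 2 * ((w 0) ^ 2 + 1)) * hw2
    rw [integral_congr_ae key, integral_const]
    have hz2 : ‖z‖ ^ 2 = (z 0) ^ 2 := by
      rw [← real_inner_self_eq_norm_sq, hinner]; ring
    have ht2 : ‖t‖ ^ 2 = (t 0) ^ 2 := by
      rw [← real_inner_self_eq_norm_sq, hinner]; ring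
    have hzt : (inner ℝ z t : ℝ) = z 0 * t 0 := hinner z t
    rw [hzt, hz2, ht2]
    simp [measure_univ]
    norm_num
    ring
  · -- d ≥ 2
    have hd2' : 2 ≤ d := hd2
    obtain ⟨h22, h4⟩ := moments hd2' hsphere hinv
    by_cases hz0 : z = 0
    · simp [hz0, inner_zero_left]
    · have hnz : ‖z‖ ≠ 0 := norm_ne_zero_iff.2 hz0
      set zu := ‖z‖⁻¹ • z with hzu_def
      have hzu : ‖zu‖ = 1 := norm_smul_inv_norm hz0
      have hz_eq : z = ‖z‖ • zu := by
        rw [hzu_def, smul_smul, mul_inv_cancel₀ hnz, one_smul]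
      have hzuzu : ⟪zu, zu⟫ = 1 := by
        rw [real_inner_self_eq_norm_sq, hzu]; norm_num
      set c := (⟪zu, t⟫ : ℝ) with hc_def
      set u0 := t - c • zu with hu0_def
      have hperp : ⟪zu, u0⟫ = 0 := by
        rw [hu0_def, inner_sub_right, real_inner_smul_right, hzuzu]
        ring
      have hzt : (inner ℝ z t : ℝ) = ‖z‖ * c := by
        conv_lhs => rw [hz_eq]
        rw [real_inner_smul_left]
      clear_value u0 c zu
      have hNne : ((d : ℝ) * ((d : ℝ) + 2)) ≠ 0 := by
        have h0 : (0 : ℝ) < (d : ℝ) := by exact_mod_cast (by omega : 0 < d)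
        positivity
      by_cases hu0z : u0 = 0
      · -- t is collinear with z
        have ht_eq : t = c • zu := by
          rw [hu0_def] at hu0z
          exact sub_eq_zero.mp hu0z
        have hpt : ∀ w, ((inner ℝ z w : ℝ) * (inner ℝ w t : ℝ)) ^ 2
            = (‖z‖ ^ 2 * c ^ 2) * ⟪zu, w⟫ ^ 4 := by
          intro w
          have e1 : (inner ℝ z w : ℝ) = ‖z‖ * ⟪zu, w⟫ := by
            conv_lhs => rw [hz_eq]
            rw [real_inner_smul_left]
          have e2 : (inner ℝ w t : ℝ) = c * ⟪zu, w⟫ := by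
            conv_lhs => rw [ht_eq]
            rw [real_inner_smul_right, real_inner_comm]
          rw [e1, e2]; ring
        rw [integral_congr_ae (Filter.Eventually.of_forall hpt), integral_const_mul,
          h4 zu hzu, hzt]
        have ht2 : ‖t‖ ^ 2 = c ^ 2 := by
          rw [← real_inner_self_eq_norm_sq, ht_eq, real_inner_smul_left,
            real_inner_smul_right, hzuzu]
          ring
        rw [ht2]
        field_simp
        ring
      · -- general case
        have hs : ‖u0‖ ≠ 0 := norm_ne_zero_iff.2 hu0z
        set s := ‖u0‖ with hs_def
        set uu := s⁻¹ • u0 with huu_def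
        have huu : ‖uu‖ = 1 := norm_smul_inv_norm hu0z
        have hzuuu : ⟪zu, uu⟫ = 0 := by
          rw [huu_def, real_inner_smul_right, hperp]
          ring
        have huuuu : ⟪uu, uu⟫ = 1 := by
          rw [real_inner_self_eq_norm_sq, huu]; norm_num
        have hu_eq : u0 = s • uu := by
          rw [huu_def, smul_smul, mul_inv_cancel₀ hs, one_smul]
        have ht_eq : t = c • zu + s • uu := by
          rw [← hu_eq, hu0_def]; abel
        clear_value uu s
        have hodd : ∫ w, ⟪zu, w⟫ ^ 3 * ⟪uu, w⟫ ^ 1 ∂μ = 0 := by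
          have hneg : ⟪zu, -uu⟫ = (0:ℝ) := by rw [inner_neg_right, hzuuu]; ring
          have h1 := pair_mom hd2' hinv hzu huu hzuuu hzu (by rw [norm_neg, huu]) hneg 3 1
          have h2 : ∫ w, ⟪zu, w⟫ ^ 3 * ⟪(-uu : EuclideanSpace ℝ (Fin d)), w⟫ ^ 1 ∂μ
              = - ∫ w, ⟪zu, w⟫ ^ 3 * ⟪uu, w⟫ ^ 1 ∂μ := by
            rw [← integral_neg]
            refine integral_congr_ae (Filter.Eventually.of_forall fun w => ?_)
            show ⟪zu, w⟫ ^ 3 * ⟪(-uu : EuclideanSpace ℝ (Fin d)), w⟫ ^ 1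
              = -(⟪zu, w⟫ ^ 3 * ⟪uu, w⟫ ^ 1)
            rw [inner_neg_left]; ring
          rw [h2] at h1
          linarith
        have hpt : ∀ w, ((inner ℝ z w : ℝ) * (inner ℝ w t : ℝ)) ^ 2
            = (‖z‖ ^ 2 * c ^ 2) * ⟪zu, w⟫ ^ 4
              + (2 * ‖z‖ ^ 2 * c * s) * (⟪zu, w⟫ ^ 3 * ⟪uu, w⟫ ^ 1)
              + (‖z‖ ^ 2 * s ^ 2) * (⟪zu, w⟫ ^ 2 * ⟪uu, w⟫ ^ 2) := by
          intro w
          have e1 : (inner ℝ z w : ℝ) = ‖z‖ * ⟪zu, w⟫ := by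
            conv_lhs => rw [hz_eq]
            rw [real_inner_smul_left]
          have e2 : (inner ℝ w t : ℝ) = c * ⟪zu, w⟫ + s * ⟪uu, w⟫ := by
            conv_lhs => rw [ht_eq]
            rw [inner_add_right, real_inner_smul_right, real_inner_smul_right,
              real_inner_comm w zu, real_inner_comm w uu]
          rw [e1, e2]; ring
        have J0 : Integrable (fun w => (‖z‖ ^ 2 * c ^ 2) * ⟪zu, w⟫ ^ 4) μ :=
          (integ1 hsphere _ 4).const_mul _
        have J1 : Integrable (fun w => (2 * ‖z‖ ^ 2 * c * s) * (⟪zu, w⟫ ^ 3 * ⟪uu, w⟫ ^ 1)) μ :=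
          (integ hsphere _ _ 3 1).const_mul _
        have J2 : Integrable (fun w => (‖z‖ ^ 2 * s ^ 2) * (⟪zu, w⟫ ^ 2 * ⟪uu, w⟫ ^ 2)) μ :=
          (integ hsphere _ _ 2 2).const_mul _
        have J01 : Integrable (fun w => (‖z‖ ^ 2 * c ^ 2) * ⟪zu, w⟫ ^ 4
            + (2 * ‖z‖ ^ 2 * c * s) * (⟪zu, w⟫ ^ 3 * ⟪uu, w⟫ ^ 1)) μ := J0.add J1
        rw [integral_congr_ae (Filter.Eventually.of_forall hpt), integral_add J01 J2,
          integral_add J0 J1, integral_const_mul, integral_const_mul, integral_const_mul,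
          h4 zu hzu, hodd, h22 zu uu hzu huu hzuuu, hzt]
        have ht2 : ‖t‖ ^ 2 = c ^ 2 + s ^ 2 := by
          rw [← real_inner_self_eq_norm_sq, ht_eq]
          have huz : ⟪uu, zu⟫ = (0:ℝ) := by rw [real_inner_comm, hzuuu]
          simp only [inner_add_left, inner_add_right, real_inner_smul_left,
            real_inner_smul_right, hzuzu, hzuuu, huuuu, huz]
          ring
        rw [ht2]
        field_simp
        ring
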